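/- arXiv:2008.05391 — 2 statements merged into one kernel-verified Lean document; each statement's English description precedes it below -/
import Mathlib

section
/- Let u_1, …, u_{j+1} be distinct elements of V with prefix sets S_i := {u_1, …, u_i} (S_0 = ∅), let p ≤ j and put Q := S_p. Let OPT ⊆ V with c(OPT) ≤ b, let o, o' ∈ OPT be distinct, and put OPT⋄ := OPT \ {o, o'}. Assume: (i) c(S_j) < c(OPT⋄) ≤ c(S_{j+1}); (ii) for every 0 ≤ i ≤ j and every v ∈ OPT⋄ \ S_i, f(u_{i+1} ∣ S_i) · c v ≥ f(v ∣ S_i) · c (u_{i+1}); (iii) for every v ∈ S_{j+1} \ Q, f(o ∣ Q) · c v ≥ f(v ∣ Q) · c o. Then for every real μ with μ ≥ f({o}) and μ ≥ f({o'}), it holds that μ ≥ f(OPT)/2 + (1/(2·(1 − 1/e))) · ( f(o ∣ Q) · (c(Q) + c(o) + c(o') − b)/c(o) − f(Q) ). -/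
open Finset

lemma tele {V : Type*} [DecidableEq V] (f : Finset V → ℝ)
    (hmono : ∀ S T : Finset V, S ⊆ T → f S ≤ f T)
    (hsub : ∀ S T : Finset V, f (S ∪ T) + f (S ∩ T) ≤ f S + f T) :
    ∀ (B A : Finset V), f (A ∪ B) ≤ f A + ∑ v ∈ B, (f (insert v A) - f A) := by
  intro B
  induction B using Finset.induction_on with
  | empty => intro A; simp
  | insert a B h ih =>
      intro A
      have hu : (A ∪ B) ∪ insert a A = A ∪ insert a B := by
        ext x; simp only [mem_union, mem_insert]; tauto
      have hi : f A ≤ f ((A ∪ B) ∩ insert a A) := by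
        apply hmono
        intro x hx
        simp only [mem_inter, mem_union, mem_insert]
        tauto
      have h2 := hsub (A ∪ B) (insert a A)
      rw [hu] at h2
      have h3 := ih A
      rw [Finset.sum_insert h]
      linarith

lemma marg_mono {V : Type*} [DecidableEq V] (f : Finset V → ℝ)
    (hmono : ∀ S T : Finset V, S ⊆ T → f S ≤ f T)
    (hsub : ∀ S T : Finset V, f (S ∪ T) + f (S ∩ T) ≤ f S + f T)
    {A B : Finset V} (hAB : A ⊆ B) (a : V) :
    f (insert a B) - f B ≤ f (insert a A) - f A := by
  have h := hsub B (insert a A)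
  have hu : B ∪ insert a A = insert a B := by
    ext x
    simp only [mem_union, mem_insert]
    have := @hAB x
    tauto
  have hi : f A ≤ f (B ∩ insert a A) := by
    apply hmono
    intro x hx
    simp only [mem_inter, mem_insert]
    exact ⟨hAB hx, Or.inr hx⟩
  rw [hu] at h
  linarith

/-- Corollary 3.6: the largest singleton value satisfies
μ ≥ f(OPT)/2 + (1/(2(1−1/e)))·( f(o∣Q)·(c(Q)+c(o)+c(o')−b)/c(o) − f(Q) ). -/
theorem stmt7 {V : Type*} [Fintype V] [DecidableEq V]
    (f : Finset V → ℝ) (c : V → ℝ) (b : ℝ)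
    (hf0 : f ∅ = 0)
    (hmono : ∀ S T : Finset V, S ⊆ T → f S ≤ f T)
    (hsub : ∀ S T : Finset V, f (S ∪ T) + f (S ∩ T) ≤ f S + f T)
    (hcpos : ∀ v : V, 0 < c v)
    (hb : 0 < b)
    (j : ℕ) (u : ℕ → V)
    (hinj : ∀ i i' : ℕ, i < j + 1 → i' < j + 1 → u i = u i' → i = i')
    (S : ℕ → Finset V) (hS : ∀ i : ℕ, S i = (Finset.range i).image u)
    (p : ℕ) (hpj : p ≤ j)
    (OPT : Finset V) (hOPTb : ∑ v ∈ OPT, c v ≤ b)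
    (o o' : V) (ho : o ∈ OPT) (ho' : o' ∈ OPT) (hoo' : o ≠ o')
    (hsandwich : (∑ v ∈ S j, c v) < (∑ v ∈ OPT \ {o, o'}, c v) ∧
      (∑ v ∈ OPT \ {o, o'}, c v) ≤ ∑ v ∈ S (j + 1), c v)
    (hrule : ∀ i : ℕ, i ≤ j → ∀ v ∈ (OPT \ {o, o'}) \ S i,
      (f (insert (u i) (S i)) - f (S i)) * c v ≥
      (f (insert v (S i)) - f (S i)) * c (u i))
    (hruleQ : ∀ v ∈ S (j + 1) \ S p,
      (f (insert o (S p)) - f (S p)) * c v ≥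
      (f (insert v (S p)) - f (S p)) * c o) :
    ∀ μ : ℝ, μ ≥ f {o} → μ ≥ f {o'} →
      μ ≥ f OPT / 2 + (1 / (2 * (1 - 1 / Real.exp 1))) *
        ((f (insert o (S p)) - f (S p)) *
            ((∑ v ∈ S p, c v) + c o + c o' - b) / c o - f (S p)) := by
  intro μ hμo hμo'
  -- abbreviations
  set OPTd := OPT \ {o, o'} with hOPTd
  set C := ∑ v ∈ OPTd, c v with hCdef
  set M := f OPTd with hMdef
  set q := f (insert o (S p)) - f (S p) with hqdef
  set cSj := ∑ v ∈ S j, c v with hcSjdef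
  set cQ := ∑ v ∈ S p, c v with hcQdef
  clear_value OPTd C M q cSj cQ
  -- basic facts about S
  have hSsucc : ∀ i : ℕ, S (i + 1) = insert (u i) (S i) := by
    intro i; rw [hS, hS, Finset.range_add_one, Finset.image_insert]
  have hSsub : ∀ {i k : ℕ}, i ≤ k → S i ⊆ S k := by
    intro i k hik; rw [hS, hS]
    exact Finset.image_subset_image (Finset.range_subset_range.2 hik)
  have hmem : ∀ {k i : ℕ}, k < i → u k ∈ S i := by
    intro k i hk; rw [hS]; exact Finset.mem_image_of_mem u (Finset.mem_range.2 hk)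
  have hnotmem : ∀ {k i : ℕ}, i ≤ k → k ≤ j → u k ∉ S i := by
    intro k i hik hkj hmem'
    rw [hS] at hmem'
    obtain ⟨m, hm, hum⟩ := Finset.mem_image.1 hmem'
    rw [Finset.mem_range] at hm
    have := hinj m k (by omega) (by omega) hum
    omega
  have hS0 : f (S 0) = 0 := by rw [hS]; simpa using hf0
  have hcSj0 : (0:ℝ) ≤ cSj := by
    rw [hcSjdef]; exact Finset.sum_nonneg fun v _ => (hcpos v).le
  have hcQ0 : (0:ℝ) ≤ cQ := by
    rw [hcQdef]; exact Finset.sum_nonneg fun v _ => (hcpos v).le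
  have hCSj : cSj < C := hsandwich.1
  have hC0 : (0:ℝ) < C := lt_of_le_of_lt hcSj0 hCSj
  have hM0 : (0:ℝ) ≤ M := by
    rw [hMdef, ← hf0]; exact hmono _ _ (Finset.empty_subset _)
  have hq0 : (0:ℝ) ≤ q := by
    rw [hqdef, sub_nonneg]; exact hmono _ _ (Finset.subset_insert _ _)
  have hco : (0:ℝ) < c o := hcpos o
  -- the exponential constant
  have hexp1 : (2:ℝ) ≤ Real.exp 1 := by
    have := Real.add_one_le_exp (1:ℝ); linarith
  have hE : (0:ℝ) < 1 - 1 / Real.exp 1 := by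
    have h1 : (1:ℝ) / Real.exp 1 < 1 := by
      rw [div_lt_one (by linarith : (0:ℝ) < Real.exp 1)]; linarith
    linarith
  -- per-step greedy inequality
  have hA : ∀ i, i ≤ j → (M - f (S i)) * c (u i) ≤ (f (insert (u i) (S i)) - f (S i)) * C := by
    intro i hij
    have hg0 : 0 ≤ f (insert (u i) (S i)) - f (S i) := by
      have := hmono (S i) (insert (u i) (S i)) (Finset.subset_insert _ _); linarith
    have h1 : M ≤ f (S i ∪ (OPTd \ S i)) := by
      rw [hMdef]
      apply hmono; intro x hx
      simp only [Finset.mem_union, Finset.mem_sdiff]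
      by_cases hxS : x ∈ S i
      · exact Or.inl hxS
      · exact Or.inr ⟨hx, hxS⟩
    have h2 := tele f hmono hsub (OPTd \ S i) (S i)
    have h3 : ∑ v ∈ OPTd \ S i, (f (insert v (S i)) - f (S i)) * c (u i)
        ≤ ∑ v ∈ OPTd \ S i, (f (insert (u i) (S i)) - f (S i)) * c v := by
      apply Finset.sum_le_sum
      intro v hv
      exact hrule i hij v hv
    rw [← Finset.sum_mul, ← Finset.mul_sum] at h3
    have h4 : ∑ v ∈ OPTd \ S i, c v ≤ C := by
      rw [hCdef]
      apply Finset.sum_le_sum_of_subset_of_nonneg (Finset.sdiff_subset)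
      intro v _ _; exact (hcpos v).le
    have h5 : (f (insert (u i) (S i)) - f (S i)) * (∑ v ∈ OPTd \ S i, c v)
        ≤ (f (insert (u i) (S i)) - f (S i)) * C := mul_le_mul_of_nonneg_left h4 hg0
    have h6 : M - f (S i) ≤ ∑ v ∈ OPTd \ S i, (f (insert v (S i)) - f (S i)) := by linarith
    have h7 := mul_le_mul_of_nonneg_right h6 (hcpos (u i)).le
    linarith
  -- growth of greedy
  have hgrow : ∀ i, i ≤ j → M - f (S i) ≤ M * ∏ k ∈ Finset.range i, (1 - c (u k) / C) := by
    intro i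
    induction i with
    | zero => intro _; simp [hS0]
    | succ i ih =>
        intro hij
        have hij' : i ≤ j := Nat.le_of_succ_le hij
        have hiltj : i < j := hij
        have hcuC : c (u i) ≤ cSj := by
          rw [hcSjdef]
          exact Finset.single_le_sum (fun v _ => (hcpos v).le) (hmem hiltj)
        have hP : (0:ℝ) ≤ 1 - c (u i) / C := by
          rw [sub_nonneg, div_le_one hC0]; linarith
        have hAi := hA i hij'
        have h1 : M - f (S (i + 1)) ≤ (M - f (S i)) * (1 - c (u i) / C) := by
          rw [hSsucc i]
          have hg : (M - f (S i)) * c (u i) / C ≤ f (insert (u i) (S i)) - f (S i) := by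
            rw [div_le_iff₀ hC0]; exact hAi
          have heq : (M - f (S i)) * (1 - c (u i) / C)
              = (M - f (S i)) - (M - f (S i)) * c (u i) / C := by ring
          rw [heq]
          linarith
        have h2 := mul_le_mul_of_nonneg_right (ih hij') hP
        rw [Finset.prod_range_succ, ← mul_assoc]
        linarith
  -- product bound ≤ 1/e
  have hcsumj : cSj = ∑ k ∈ Finset.range j, c (u k) := by
    rw [hcSjdef, hS]
    rw [Finset.sum_image]
    intro x hx y hy hxy
    rw [Finset.mem_coe, Finset.mem_range] at hx hy
    exact hinj x y (by omega) (by omega) hxy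
  have hprodle : (∏ k ∈ Finset.range j, (1 - c (u k) / C)) ≤ Real.exp (-(cSj / C)) := by
    have h1 : ∀ k ∈ Finset.range j, (0:ℝ) ≤ 1 - c (u k) / C := by
      intro k hk
      rw [Finset.mem_range] at hk
      have hcuC : c (u k) ≤ cSj := by
        rw [hcSjdef]
        exact Finset.single_le_sum (fun v _ => (hcpos v).le) (hmem hk)
      rw [sub_nonneg, div_le_one hC0]; linarith
    have h2 : ∀ k ∈ Finset.range j, (1 - c (u k) / C) ≤ Real.exp (-(c (u k) / C)) := by
      intro k _
      have := Real.add_one_le_exp (-(c (u k) / C))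
      linarith
    calc (∏ k ∈ Finset.range j, (1 - c (u k) / C))
        ≤ ∏ k ∈ Finset.range j, Real.exp (-(c (u k) / C)) := Finset.prod_le_prod h1 h2
      _ = Real.exp (∑ k ∈ Finset.range j, -(c (u k) / C)) := (Real.exp_sum _ _).symm
      _ = Real.exp (-(cSj / C)) := by
          congr 1
          rw [hcsumj, Finset.sum_div, ← Finset.sum_neg_distrib]
  have hye : cSj / C * Real.exp (-(cSj / C)) ≤ 1 / Real.exp 1 := by
    set y := cSj / C with hy
    have hy0 : 0 ≤ y := div_nonneg hcSj0 hC0.le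
    have h01 : y * Real.exp 1 ≤ Real.exp y := by
      have h := Real.add_one_le_exp (y - 1)
      rw [Real.exp_sub] at h
      have : y ≤ Real.exp y / Real.exp 1 := by linarith
      exact (le_div_iff₀ (Real.exp_pos 1)).mp this
    rw [Real.exp_neg]
    have heq : y * (Real.exp y)⁻¹ = y / Real.exp y := by ring
    rw [heq, div_le_div_iff₀ (Real.exp_pos y) (Real.exp_pos 1)]
    linarith
  -- the 1 - 1/e bound
  have hstar : (1 - 1 / Real.exp 1) * M
      ≤ f (S j) + (f (insert (u j) (S j)) - f (S j)) * (C - cSj) / c (u j) := by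
    have hcu : 0 < c (u j) := hcpos (u j)
    have hAj := hA j le_rfl
    have hδ : (0:ℝ) ≤ C - cSj := by linarith
    have h1 : (M - f (S j)) * (C - cSj)
        ≤ ((f (insert (u j) (S j)) - f (S j)) * (C - cSj) / c (u j)) * C := by
      rw [div_mul_eq_mul_div, le_div_iff₀ hcu]
      linarith [mul_le_mul_of_nonneg_right hAj hδ]
    have h2 : (M - (f (S j) + (f (insert (u j) (S j)) - f (S j)) * (C - cSj) / c (u j))) * C
        ≤ (M - f (S j)) * cSj := by linarith [h1]
    have h3 : (M - f (S j)) * cSj ≤ (M * ∏ k ∈ Finset.range j, (1 - c (u k) / C)) * cSj :=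
      mul_le_mul_of_nonneg_right (hgrow j le_rfl) hcSj0
    have h4 : (M * ∏ k ∈ Finset.range j, (1 - c (u k) / C)) * cSj
        ≤ M * (Real.exp (-(cSj / C)) * cSj) := by
      have hh := mul_le_mul_of_nonneg_right hprodle hcSj0
      have := mul_le_mul_of_nonneg_left hh hM0
      rw [mul_assoc]
      exact this
    have h5 : M * (Real.exp (-(cSj / C)) * cSj) ≤ M * (C / Real.exp 1) := by
      apply mul_le_mul_of_nonneg_left _ hM0
      have hmul := mul_le_mul_of_nonneg_right hye hC0.le
      have heq1 : cSj / C * Real.exp (-(cSj / C)) * C = Real.exp (-(cSj / C)) * cSj := by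
        rw [mul_comm (cSj / C) (Real.exp (-(cSj / C))), mul_assoc,
          div_mul_cancel₀ _ hC0.ne']
      have heq2 : 1 / Real.exp 1 * C = C / Real.exp 1 := by ring
      rw [heq1, heq2] at hmul
      exact hmul
    have h6 : (M - (f (S j) + (f (insert (u j) (S j)) - f (S j)) * (C - cSj) / c (u j))) * C
        ≤ (M / Real.exp 1) * C := by
      have heq : M * (C / Real.exp 1) = M / Real.exp 1 * C := by ring
      linarith [h2, h3, h4, h5, heq.le, heq.ge]
    have h7 := le_of_mul_le_mul_right h6 hC0
    have heq : (1 - 1 / Real.exp 1) * M = M - M / Real.exp 1 := by ring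
    linarith
  -- marginal of u j at Q bound (rule at Q)
  have hujQ : u j ∈ S (j + 1) \ S p := by
    rw [Finset.mem_sdiff]
    exact ⟨hmem (Nat.lt_succ_self j), hnotmem hpj le_rfl⟩
  have h2 : (f (insert (u j) (S j)) - f (S j)) * c o ≤ q * c (u j) := by
    have hm := marg_mono f hmono hsub (hSsub hpj) (u j)
    have hr := hruleQ (u j) hujQ
    have := mul_le_mul_of_nonneg_right hm hco.le
    linarith
  -- threshold bound on f(S j)
  have h3 : f (S j) * c o ≤ f (S p) * c o + q * (cSj - cQ) := by
    have hQsub : S p ⊆ S j := hSsub hpj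
    have hUnion : S p ∪ (S j \ S p) = S j := Finset.union_sdiff_of_subset hQsub
    have ht := tele f hmono hsub (S j \ S p) (S p)
    rw [hUnion] at ht
    have hpt : ∑ v ∈ S j \ S p, (f (insert v (S p)) - f (S p)) * c o
        ≤ ∑ v ∈ S j \ S p, q * c v := by
      apply Finset.sum_le_sum
      intro v hv
      apply hruleQ
      rw [Finset.mem_sdiff] at hv ⊢
      exact ⟨hSsub (Nat.le_succ j) hv.1, hv.2⟩
    rw [← Finset.sum_mul, ← Finset.mul_sum] at hpt
    have hsd : ∑ v ∈ S j \ S p, c v = cSj - cQ := by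
      rw [Finset.sum_sdiff_eq_sub hQsub, hcSjdef, hcQdef]
    rw [hsd] at hpt
    have := mul_le_mul_of_nonneg_right ht hco.le
    nlinarith [this, hpt]
  -- f OPT ≤ M + f {o} + f {o'}
  have h4 : f OPT ≤ M + f {o} + f {o'} := by
    have hOPTeq : OPT ⊆ OPTd ∪ {o, o'} := by
      intro x hx
      rw [Finset.mem_union, hOPTd, Finset.mem_sdiff]
      by_cases hxo : x ∈ ({o, o'} : Finset V)
      · exact Or.inr hxo
      · exact Or.inl ⟨hx, hxo⟩
    have ht := tele f hmono hsub ({o, o'} : Finset V) OPTd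
    have hsum : ∑ v ∈ ({o, o'} : Finset V), (f (insert v OPTd) - f OPTd)
        = (f (insert o OPTd) - f OPTd) + (f (insert o' OPTd) - f OPTd) :=
      Finset.sum_pair hoo'
    have hmo : f (insert o OPTd) - f OPTd ≤ f {o} := by
      have := marg_mono f hmono hsub (Finset.empty_subset OPTd) o
      simpa [hf0] using this
    have hmo' : f (insert o' OPTd) - f OPTd ≤ f {o'} := by
      have := marg_mono f hmono hsub (Finset.empty_subset OPTd) o'
      simpa [hf0] using this
    have := hmono _ _ hOPTeq
    rw [hsum] at ht
    rw [hMdef]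
    linarith
  -- budget split
  have h5 : C + c o + c o' ≤ b := by
    have hsub' : ({o, o'} : Finset V) ⊆ OPT := by
      intro x hx
      rw [Finset.mem_insert, Finset.mem_singleton] at hx
      rcases hx with h | h <;> subst h <;> assumption
    have := Finset.sum_sdiff (f := c) hsub'
    have hpair : ∑ v ∈ ({o, o'} : Finset V), c v = c o + c o' := Finset.sum_pair hoo'
    rw [hpair] at this
    rw [hCdef, hOPTd]
    linarith
  -- main multiplied inequality
  have hcu : 0 < c (u j) := hcpos (u j)
  have hδ : (0:ℝ) ≤ C - cSj := by linarith
  have h2' : (f (insert (u j) (S j)) - f (S j)) * (C - cSj) / c (u j) * c o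
      ≤ q * (C - cSj) := by
    rw [div_mul_eq_mul_div, div_le_iff₀ hcu]
    linarith [mul_le_mul_of_nonneg_right h2 hδ]
  have hmain : (1 - 1 / Real.exp 1) * M * c o ≤ f (S p) * c o + q * (C - cQ) := by
    have := mul_le_mul_of_nonneg_right hstar hco.le
    linarith [this, h2', h3]
  -- the term bound
  have hterm : q * (cQ + c o + c o' - b) / c o - f (S p) ≤ -((1 - 1 / Real.exp 1) * M) := by
    have h5' : q * (cQ + c o + c o' - b) ≤ q * (cQ - C) :=
      mul_le_mul_of_nonneg_left (by linarith) hq0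
    have hmul : (q * (cQ + c o + c o' - b) / c o - f (S p)) * c o
        ≤ -((1 - 1 / Real.exp 1) * M) * c o := by
      rw [sub_mul, div_mul_cancel₀ _ (ne_of_gt hco)]
      linarith [hmain, h5']
    exact le_of_mul_le_mul_right hmul hco
  -- final assembly
  have hK0 : (0:ℝ) < 1 / (2 * (1 - 1 / Real.exp 1)) := by positivity
  have hEne : (1 - 1 / Real.exp 1) ≠ 0 := ne_of_gt hE
  have hhalf : (1 - 1 / Real.exp 1) * (1 / (2 * (1 - 1 / Real.exp 1))) = 1 / 2 := by
    rw [mul_one_div, mul_comm (2:ℝ), div_mul_eq_div_div, div_self hEne]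
  have hKE : (1 / (2 * (1 - 1 / Real.exp 1))) * -((1 - 1 / Real.exp 1) * M) = -(M / 2) := by
    linear_combination (-M) * hhalf
  have hKt : (1 / (2 * (1 - 1 / Real.exp 1))) *
      (q * (cQ + c o + c o' - b) / c o - f (S p)) ≤ -(M / 2) := by
    have := mul_le_mul_of_nonneg_left hterm hK0.le
    linarith [this, hKE.le, hKE.ge]
  linarith [h4, hμo, hμo', hKt]
end

section
/- For every finset S ⊆ V and every finset T ⊆ V with c(T) ≤ b, it holds that f(T) ≤ f(S ∪ T) ≤ f(S) + Δ(b∣S). -/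
open Finset

lemma aux_sub {V : Type*} [Fintype V] [DecidableEq V]
    (f : Finset V → ℝ)
    (hmono : ∀ S T : Finset V, S ⊆ T → f S ≤ f T)
    (hsub : ∀ S T : Finset V, f (S ∪ T) + f (S ∩ T) ≤ f S + f T)
    (S : Finset V) : ∀ A : Finset V,
    f (S ∪ A) ≤ f S + ∑ v ∈ A, (f (insert v S) - f S) := by
  intro A
  induction A using Finset.induction_on with
  | empty => simp
  | @insert a A' h ih =>
    have h1 := hsub (S ∪ A') (insert a S)
    have hu : (S ∪ A') ∪ insert a S = S ∪ insert a A' := by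
      ext x; simp [Finset.mem_insert, Finset.mem_union]; tauto
    have hi : S ⊆ (S ∪ A') ∩ insert a S := by
      intro x hx; simp [Finset.mem_inter, Finset.mem_union, Finset.mem_insert]; tauto
    have h2 := hmono _ _ hi
    rw [hu] at h1
    rw [Finset.sum_insert h]
    linarith [ih]

/-- Inequality (14): for every S and every feasible T (c(T) ≤ b),
f(T) ≤ f(S ∪ T) ≤ f(S) + Δ(b∣S), where Δ(b∣S) is the fractional-knapsack
upper bound on the largest marginal gain on top of S under budget b. -/
theorem stmt10 {V : Type*} [Fintype V] [DecidableEq V]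
    (f : Finset V → ℝ) (c : V → ℝ) (b : ℝ)
    (hf0 : f ∅ = 0)
    (hmono : ∀ S T : Finset V, S ⊆ T → f S ≤ f T)
    (hsub : ∀ S T : Finset V, f (S ∪ T) + f (S ∩ T) ≤ f S + f T)
    (hcpos : ∀ v : V, 0 < c v)
    (hb : 0 < b)
    (S T : Finset V) (hT : ∑ v ∈ T, c v ≤ b) :
    f T ≤ f (S ∪ T) ∧
    f (S ∪ T) ≤ f S + sSup {y : ℝ | ∃ x : V → ℝ,
      (∀ v : V, 0 ≤ x v ∧ x v ≤ 1) ∧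
      (∑ v : V, c v * x v ≤ b) ∧
      y = ∑ v ∈ Finset.univ \ S, (f (insert v S) - f S) * x v} := by
  constructor
  · exact hmono _ _ (Finset.subset_union_right)
  · set Δset := {y : ℝ | ∃ x : V → ℝ,
      (∀ v : V, 0 ≤ x v ∧ x v ≤ 1) ∧
      (∑ v : V, c v * x v ≤ b) ∧
      y = ∑ v ∈ Finset.univ \ S, (f (insert v S) - f S) * x v} with hΔ
    have hmarg : ∀ v : V, 0 ≤ f (insert v S) - f S := fun v => by
      have := hmono S (insert v S) (Finset.subset_insert v S)
      linarith
    have hbdd : BddAbove Δset := by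
      refine ⟨∑ v ∈ Finset.univ \ S, (f (insert v S) - f S), ?_⟩
      rintro y ⟨x, hx, _, rfl⟩
      apply Finset.sum_le_sum
      intro v _
      calc (f (insert v S) - f S) * x v ≤ (f (insert v S) - f S) * 1 :=
            mul_le_mul_of_nonneg_left (hx v).2 (hmarg v)
        _ = _ := mul_one _
    -- indicator of T \ S
    set x : V → ℝ := fun v => if v ∈ T \ S then 1 else 0 with hxdef
    have hmem : (∑ v ∈ Finset.univ \ S, (f (insert v S) - f S) * x v) ∈ Δset := by
      refine ⟨x, ?_, ?_, rfl⟩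
      · intro v; simp only [hxdef]; split <;> norm_num
      · have heq : ∑ v : V, c v * x v = ∑ v ∈ T \ S, c v := by
          simp only [hxdef, mul_ite, mul_one, mul_zero]
          rw [Finset.sum_ite_mem, Finset.univ_inter]
        rw [heq]
        refine le_trans ?_ hT
        apply Finset.sum_le_sum_of_subset_of_nonneg (Finset.sdiff_subset)
        intro v _ _; exact (hcpos v).le
    have hle := le_csSup hbdd hmem
    have hsum : ∑ v ∈ Finset.univ \ S, (f (insert v S) - f S) * x v
        = ∑ v ∈ T \ S, (f (insert v S) - f S) := by
      rw [Finset.sum_congr rfl (fun v _ => by rw [mul_ite, mul_one, mul_zero]),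
        Finset.sum_ite_mem]
      congr 1
      ext v
      simp only [Finset.mem_inter, Finset.mem_sdiff, Finset.mem_univ, true_and]
      tauto
    have hkey : f (S ∪ T) ≤ f S + ∑ v ∈ T \ S, (f (insert v S) - f S) := by
      have := aux_sub f hmono hsub S (T \ S)
      rwa [Finset.union_sdiff_self_eq_union] at this
    rw [hsum] at hle
    linarith
end
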